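/- Uniform Gronwall lemma: let y, a, b be nonnegative locally integrable functions on (t₀,∞), y locally absolutely continuous, with y'(t) ≤ a(t) + b(t)y(t) for t ≥ t₀, and suppose for some r > 0 and constants k₁,k₂,k₃: ∫_t^{t+r} a ≤ k₁, ∫_t^{t+r} b ≤ k₂, ∫_t^{t+r} y ≤ k₃ for all t ≥ t₀. Then y(t+r) ≤ (k₃/r + k₁) e^{k₂} for all t ≥ t₀. -/

import Mathlib

open MeasureTheory

open Set Filter

private lemma gron_step (t₀ : ℝ) (y y' a b : ℝ → ℝ)
    (ha0 : ∀ t ≥ t₀, 0 ≤ a t) (hb0 : ∀ t ≥ t₀, 0 ≤ b t) (hy0 : ∀ t ≥ t₀, 0 ≤ y t)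
    (hderiv : ∀ t ≥ t₀, HasDerivAt y (y' t) t)
    (hineq : ∀ t ≥ t₀, y' t ≤ a t + b t * y t)
    (s u : ℝ) (hs : t₀ ≤ s) (hsu : s ≤ u)
    (hia : IntervalIntegrable a volume s u)
    (hib : IntervalIntegrable b volume s u)
    (hβ : (∫ x in s..u, b x) < 1) :
    y u ≤ (y s + ∫ x in s..u, a x) / (1 - ∫ x in s..u, b x) := by
  set A := ∫ x in s..u, a x with hA
  set β := ∫ x in s..u, b x with hβdef
  have hcont : ContinuousOn y (Icc s u) := fun x hx =>
    ((hderiv x (hs.trans hx.1)).continuousAt).continuousWithinAt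
  obtain ⟨v, hvmem, hvmax⟩ :=
    isCompact_Icc.exists_isMaxOn (nonempty_Icc.2 hsu) hcont
  have hsv : s ≤ v := hvmem.1
  have hvu : v ≤ u := hvmem.2
  have hsub : uIcc s v ⊆ uIcc s u := by
    rw [uIcc_of_le hsv, uIcc_of_le hsu]; exact Icc_subset_Icc le_rfl hvu
  have hsub2 : uIcc v u ⊆ uIcc s u := by
    rw [uIcc_of_le hvu, uIcc_of_le hsu]; exact Icc_subset_Icc hsv le_rfl
  have hia' : IntervalIntegrable a volume s v := hia.mono_set hsub
  have hib' : IntervalIntegrable b volume s v := hib.mono_set hsub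
  have hycont' : ContinuousOn y (uIcc s v) := by
    rw [uIcc_of_le hsv]; exact hcont.mono (Icc_subset_Icc le_rfl hvu)
  have hiby : IntervalIntegrable (fun x => b x * y x) volume s v :=
    hib'.mul_continuousOn hycont'
  have hM0 : 0 ≤ y v := hy0 v (hs.trans hsv)
  -- key integral inequality
  have key : y v - y s ≤ ∫ x in s..v, (a x + b x * y x) := by
    apply intervalIntegral.sub_le_integral_of_hasDeriv_right_of_le hsv
      (hcont.mono (Icc_subset_Icc le_rfl hvu))
      (fun x hx => (hderiv x (hs.trans hx.1.le)).hasDerivWithinAt)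
    · exact (intervalIntegrable_iff_integrableOn_Icc_of_le hsv).1 (hia'.add hiby)
    · exact fun x hx => hineq x (hs.trans hx.1.le)
  have hsplit : (∫ x in s..v, (a x + b x * y x))
      = (∫ x in s..v, a x) + ∫ x in s..v, b x * y x :=
    intervalIntegral.integral_add hia' hiby
  -- ∫_s^v a ≤ A
  have haA : (∫ x in s..v, a x) ≤ A := by
    have hadj : (∫ x in s..v, a x) + (∫ x in v..u, a x) = A :=
      intervalIntegral.integral_add_adjacent_intervals hia' (hia.mono_set hsub2)
    have h2 : 0 ≤ ∫ x in v..u, a x :=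
      intervalIntegral.integral_nonneg hvu (fun x hx => ha0 x (hs.trans (hsv.trans hx.1)))
    linarith
  -- ∫_s^v b y ≤ β * y v
  have hbB : (∫ x in s..v, b x * y x) ≤ β * y v := by
    have h1 : (∫ x in s..v, b x * y x) ≤ ∫ x in s..v, b x * y v := by
      apply intervalIntegral.integral_mono_on hsv hiby (hib'.mul_const _)
      intro x hx
      exact mul_le_mul_of_nonneg_left (hvmax ⟨hx.1, hx.2.trans hvu⟩)
        (hb0 x (hs.trans hx.1))
    have h2 : (∫ x in s..v, b x * y v) = (∫ x in s..v, b x) * y v := by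
      rw [intervalIntegral.integral_mul_const]
    have h3 : (∫ x in s..v, b x) ≤ β := by
      have hadj : (∫ x in s..v, b x) + (∫ x in v..u, b x) = β :=
        intervalIntegral.integral_add_adjacent_intervals hib' (hib.mono_set hsub2)
      have h4 : 0 ≤ ∫ x in v..u, b x :=
        intervalIntegral.integral_nonneg hvu (fun x hx => hb0 x (hs.trans (hsv.trans hx.1)))
      linarith
    calc (∫ x in s..v, b x * y x) ≤ (∫ x in s..v, b x) * y v := h1.trans_eq h2
    _ ≤ β * y v := mul_le_mul_of_nonneg_right h3 hM0
  have hβ1 : 0 < 1 - β := by linarith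
  have hMle : y v * (1 - β) ≤ y s + A := by nlinarith [key, hsplit, haA, hbB]
  have : y v ≤ (y s + A) / (1 - β) := (le_div_iff₀ hβ1).2 hMle
  exact (hvmax ⟨hsu, le_rfl⟩).trans this

private lemma gron_chain (t₀ : ℝ) (y y' a b : ℝ → ℝ)
    (ha0 : ∀ t ≥ t₀, 0 ≤ a t) (hb0 : ∀ t ≥ t₀, 0 ≤ b t) (hy0 : ∀ t ≥ t₀, 0 ≤ y t)
    (hderiv : ∀ t ≥ t₀, HasDerivAt y (y' t) t)
    (hineq : ∀ t ≥ t₀, y' t ≤ a t + b t * y t)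
    (s T : ℝ) (hs : t₀ ≤ s) (hsT : s ≤ T)
    (hIa : ∀ p q, s ≤ p → p ≤ q → q ≤ T → IntervalIntegrable a volume p q)
    (hIb : ∀ p q, s ≤ p → p ≤ q → q ≤ T → IntervalIntegrable b volume p q) :
    y T ≤ (y s + ∫ x in s..T, a x) * Real.exp (∫ x in s..T, b x) := by
  set K := ∫ x in s..T, b x with hK
  have hK0 : 0 ≤ K :=
    intervalIntegral.integral_nonneg hsT (fun x hx => hb0 x (hs.trans hx.1))
  have hA0 : 0 ≤ ∫ x in s..T, a x :=
    intervalIntegral.integral_nonneg hsT (fun x hx => ha0 x (hs.trans hx.1))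
  have hys : 0 ≤ y s := hy0 s hs
  set B : ℝ → ℝ := fun v => ∫ x in s..v, b x with hBdef
  have hBcont : ContinuousOn B (Icc s T) := by
    have : IntegrableOn b (uIcc s T) volume := by
      rw [uIcc_of_le hsT]
      exact (intervalIntegrable_iff_integrableOn_Icc_of_le hsT).1 (hIb s T le_rfl hsT le_rfl)
    have := intervalIntegral.continuousOn_primitive_interval this
    rwa [uIcc_of_le hsT] at this
  -- main bound for each N with K < N
  have main : ∀ N : ℕ, K < N → y T ≤ (y s + ∫ x in s..T, a x) * ((1 - K / N)⁻¹) ^ N := by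
    intro N hKN
    have hN0 : (0:ℝ) < N := lt_of_le_of_lt hK0 hKN
    set η := K / N with hη
    have hη0 : 0 ≤ η := div_nonneg hK0 hN0.le
    have hη1 : η < 1 := (div_lt_one hN0).2 hKN
    set c : ℝ := (1 - η)⁻¹ with hc
    have hc1 : 1 ≤ c := by
      rw [hc, le_inv_comm₀] <;> simp <;> linarith
    have hKNη : K = N * η := by rw [hη]; field_simp [hN0.ne']
    have step : ∀ i : ℕ, i ≤ N → ∃ v, v ∈ Icc s T ∧ B v = i * η ∧
        y v ≤ (y s + ∫ x in s..v, a x) * c ^ i := by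
      intro i hi
      induction i with
      | zero =>
        refine ⟨s, ⟨le_rfl, hsT⟩, by simp [hBdef], ?_⟩
        simp
      | succ i ih =>
        obtain ⟨v, hvmem, hBv, hyv⟩ := ih (Nat.le_of_succ_le hi)
        -- find v' ∈ [v, T] with B v' = (i+1) η
        have hBT : B T = K := rfl
        have hmem : ((i:ℝ)+1) * η ∈ Icc (B v) (B T) := by
          rw [hBv, hBT, hKNη]
          constructor
          · apply mul_le_mul_of_nonneg_right _ hη0; linarith
          · apply mul_le_mul_of_nonneg_right _ hη0
            exact_mod_cast hi
        obtain ⟨v', hv'mem, hBv'⟩ :=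
          intermediate_value_Icc hvmem.2 (hBcont.mono (Icc_subset_Icc hvmem.1 le_rfl)) hmem
        have hsv' : s ≤ v' := hvmem.1.trans hv'mem.1
        have hv'T : v' ≤ T := hv'mem.2
        have hadjb : (∫ x in s..v, b x) + (∫ x in v..v', b x) = ∫ x in s..v', b x :=
          intervalIntegral.integral_add_adjacent_intervals
            (hIb s v le_rfl hvmem.1 (hvmem.2)) (hIb v v' hvmem.1 hv'mem.1 hv'T)
        have hβval : (∫ x in v..v', b x) = η := by
          have h1 : (∫ x in s..v', b x) = ((i:ℝ)+1) * η := hBv'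
          have h2 : (∫ x in s..v, b x) = (i:ℝ) * η := hBv
          rw [h2] at hadjb; linarith [hadjb, h1]
        have hstep := gron_step t₀ y y' a b ha0 hb0 hy0 hderiv hineq v v'
          (hs.trans hvmem.1) hv'mem.1
          (hIa v v' hvmem.1 hv'mem.1 hv'T) (hIb v v' hvmem.1 hv'mem.1 hv'T)
          (by rw [hβval]; exact hη1)
        rw [hβval] at hstep
        have hadja : (∫ x in s..v, a x) + (∫ x in v..v', a x) = ∫ x in s..v', a x :=
          intervalIntegral.integral_add_adjacent_intervals
            (hIa s v le_rfl hvmem.1 hvmem.2) (hIa v v' hvmem.1 hv'mem.1 hv'T)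
        have hA'0 : 0 ≤ ∫ x in v..v', a x :=
          intervalIntegral.integral_nonneg hv'mem.1
            (fun x hx => ha0 x ((hs.trans hvmem.1).trans hx.1))
        have hAv0 : 0 ≤ ∫ x in s..v, a x :=
          intervalIntegral.integral_nonneg hvmem.1 (fun x hx => ha0 x (hs.trans hx.1))
        refine ⟨v', ⟨hsv', hv'T⟩, by exact_mod_cast hBv', ?_⟩
        have hdiv : (y v + ∫ x in v..v', a x) / (1 - η)
            = (y v + ∫ x in v..v', a x) * c := by rw [hc, div_eq_mul_inv]
        rw [hdiv] at hstep
        have hc0 : 0 ≤ c := le_trans zero_le_one hc1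
        have hcpow : c ^ 1 ≤ c ^ (i+1) := pow_le_pow_right₀ hc1 (by omega)
        have hyv' : y v' ≤ ((y s + ∫ x in s..v, a x) * c ^ i + (∫ x in v..v', a x)) * c := by
          refine hstep.trans (mul_le_mul_of_nonneg_right (by linarith [hyv]) hc0)
        rw [← hadja]
        calc y v' ≤ ((y s + ∫ x in s..v, a x) * c ^ i + (∫ x in v..v', a x)) * c := hyv'
          _ = (y s + ∫ x in s..v, a x) * c ^ (i+1) + (∫ x in v..v', a x) * c ^ 1 := by ring
          _ ≤ (y s + ∫ x in s..v, a x) * c ^ (i+1) + (∫ x in v..v', a x) * c ^ (i+1) := by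
              have := mul_le_mul_of_nonneg_left hcpow hA'0; linarith
          _ = (y s + ((∫ x in s..v, a x) + ∫ x in v..v', a x)) * c ^ (i+1) := by ring
    -- apply with i = N and then go from v to T
    obtain ⟨v, hvmem, hBv, hyv⟩ := step N le_rfl
    have hβT : (∫ x in v..T, b x) = 0 := by
      have hadjb : (∫ x in s..v, b x) + (∫ x in v..T, b x) = ∫ x in s..T, b x :=
        intervalIntegral.integral_add_adjacent_intervals
          (hIb s v le_rfl hvmem.1 hvmem.2) (hIb v T hvmem.1 hvmem.2 le_rfl)
      have h2 : (∫ x in s..v, b x) = (N:ℝ) * η := hBv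
      rw [h2] at hadjb
      rw [← hK] at hadjb
      linarith [hKNη]
    have hstep := gron_step t₀ y y' a b ha0 hb0 hy0 hderiv hineq v T
      (hs.trans hvmem.1) hvmem.2
      (hIa v T hvmem.1 hvmem.2 le_rfl) (hIb v T hvmem.1 hvmem.2 le_rfl)
      (by rw [hβT]; norm_num)
    rw [hβT] at hstep
    simp only [sub_zero, div_one] at hstep
    have hadja : (∫ x in s..v, a x) + (∫ x in v..T, a x) = ∫ x in s..T, a x :=
      intervalIntegral.integral_add_adjacent_intervals
        (hIa s v le_rfl hvmem.1 hvmem.2) (hIa v T hvmem.1 hvmem.2 le_rfl)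
    have hA'0 : 0 ≤ ∫ x in v..T, a x :=
      intervalIntegral.integral_nonneg hvmem.2
        (fun x hx => ha0 x ((hs.trans hvmem.1).trans hx.1))
    have hAv0 : 0 ≤ ∫ x in s..v, a x :=
      intervalIntegral.integral_nonneg hvmem.1 (fun x hx => ha0 x (hs.trans hx.1))
    have hc0 : (0:ℝ) ≤ (1 - η)⁻¹ := le_trans zero_le_one (by
      rw [le_inv_comm₀] <;> simp <;> linarith)
    have hcpow : (1:ℝ) ≤ ((1 - η)⁻¹) ^ N := one_le_pow₀ (by
      rw [le_inv_comm₀] <;> simp <;> linarith)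
    calc y T ≤ y v + ∫ x in v..T, a x := hstep
      _ ≤ (y s + ∫ x in s..v, a x) * ((1-η)⁻¹) ^ N + (∫ x in v..T, a x) * ((1-η)⁻¹)^N := by
          nlinarith [hyv]
      _ = (y s + ((∫ x in s..v, a x) + ∫ x in v..T, a x)) * ((1-η)⁻¹)^N := by ring
      _ = (y s + ∫ x in s..T, a x) * ((1-η)⁻¹)^N := by rw [hadja]
  -- pass to the limit N → ∞
  have htend : Filter.Tendsto (fun N : ℕ => (y s + ∫ x in s..T, a x) * ((1 - K / N)⁻¹) ^ N)
      Filter.atTop (nhds ((y s + ∫ x in s..T, a x) * Real.exp K)) := by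
    have h1 : Filter.Tendsto (fun N : ℕ => ((1 + (-K) / N)) ^ N) Filter.atTop
        (nhds (Real.exp (-K))) := Real.tendsto_one_add_div_pow_exp (-K)
    have h2 : Filter.Tendsto (fun N : ℕ => (((1 + (-K) / N)) ^ N)⁻¹) Filter.atTop
        (nhds ((Real.exp (-K))⁻¹)) := h1.inv₀ (Real.exp_ne_zero _)
    rw [← Real.exp_neg, neg_neg] at h2
    have h3 : (fun N : ℕ => (((1 + (-K) / N)) ^ N)⁻¹)
        = fun N : ℕ => ((1 - K / N)⁻¹) ^ N := by
      funext N; rw [← inv_pow]; ring_nf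
    rw [h3] at h2
    exact h2.const_mul _
  refine ge_of_tendsto htend ?_
  have hev : ∀ᶠ N : ℕ in Filter.atTop, K < N := by
    obtain ⟨m, hm⟩ := exists_nat_gt K
    filter_upwards [Filter.eventually_ge_atTop m] with n hn
    exact hm.trans_le (by exact_mod_cast hn)
  filter_upwards [hev] with N hN
  exact main N hN

/-- Uniform Gronwall lemma: if `y' ≤ a + b y` on `(t₀,∞)` with
`∫_t^{t+r} a ≤ k₁`, `∫_t^{t+r} b ≤ k₂`, `∫_t^{t+r} y ≤ k₃` for all `t ≥ t₀`, then
`y(t+r) ≤ (k₃/r + k₁) e^{k₂}`. -/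
theorem stmt_19 (t₀ r k₁ k₂ k₃ : ℝ) (hr : 0 < r)
    (y y' a b : ℝ → ℝ)
    (ha0 : ∀ t ≥ t₀, 0 ≤ a t) (hb0 : ∀ t ≥ t₀, 0 ≤ b t) (hy0 : ∀ t ≥ t₀, 0 ≤ y t)
    (hint : ∀ t ≥ t₀, IntervalIntegrable a volume t (t + r) ∧
      IntervalIntegrable b volume t (t + r) ∧ IntervalIntegrable y volume t (t + r))
    (hderiv : ∀ t ≥ t₀, HasDerivAt y (y' t) t)
    (hineq : ∀ t ≥ t₀, y' t ≤ a t + b t * y t)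
    (hA : ∀ t ≥ t₀, (∫ s in t..(t + r), a s) ≤ k₁)
    (hB : ∀ t ≥ t₀, (∫ s in t..(t + r), b s) ≤ k₂)
    (hY : ∀ t ≥ t₀, (∫ s in t..(t + r), y s) ≤ k₃) :
    ∀ t ≥ t₀, y (t + r) ≤ (k₃ / r + k₁) * Real.exp k₂ := by
  intro t ht
  set T := t + r with hT
  have htT : t ≤ T := by simp [hT]; linarith
  have hsub : ∀ p q : ℝ, t ≤ p → p ≤ q → q ≤ T → uIcc p q ⊆ uIcc p (p + r) := by
    intro p q hp hpq hq
    rw [uIcc_of_le hpq, uIcc_of_le (by linarith : p ≤ p + r)]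
    exact Icc_subset_Icc le_rfl (by simp [hT] at hq ⊢; linarith)
  have hIa : ∀ p q, t ≤ p → p ≤ q → q ≤ T → IntervalIntegrable a volume p q :=
    fun p q hp hpq hq => ((hint p (ht.trans hp)).1).mono_set (hsub p q hp hpq hq)
  have hIb : ∀ p q, t ≤ p → p ≤ q → q ≤ T → IntervalIntegrable b volume p q :=
    fun p q hp hpq hq => ((hint p (ht.trans hp)).2.1).mono_set (hsub p q hp hpq hq)
  have hk₁0 : 0 ≤ k₁ := le_trans
    (intervalIntegral.integral_nonneg htT (fun x hx => ha0 x (ht.trans hx.1))) (hA t ht)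
  have hexp : (0:ℝ) < Real.exp k₂ := Real.exp_pos _
  have key : ∀ s ∈ Icc t T, y T ≤ (y s + k₁) * Real.exp k₂ := by
    intro s hsmem
    have hchain := gron_chain t₀ y y' a b ha0 hb0 hy0 hderiv hineq s T
      (ht.trans hsmem.1) hsmem.2
      (fun p q h1 h2 h3 => hIa p q (hsmem.1.trans h1) h2 h3)
      (fun p q h1 h2 h3 => hIb p q (hsmem.1.trans h1) h2 h3)
    have hak : (∫ x in s..T, a x) ≤ k₁ := by
      have hadj : (∫ x in t..s, a x) + (∫ x in s..T, a x) = ∫ x in t..T, a x :=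
        intervalIntegral.integral_add_adjacent_intervals
          (hIa t s le_rfl hsmem.1 hsmem.2) (hIa s T hsmem.1 hsmem.2 le_rfl)
      have h2 : 0 ≤ ∫ x in t..s, a x :=
        intervalIntegral.integral_nonneg hsmem.1 (fun x hx => ha0 x (ht.trans hx.1))
      have h3 := hA t ht
      rw [← hT] at h3
      linarith
    have hbk : (∫ x in s..T, b x) ≤ k₂ := by
      have hadj : (∫ x in t..s, b x) + (∫ x in s..T, b x) = ∫ x in t..T, b x :=
        intervalIntegral.integral_add_adjacent_intervals
          (hIb t s le_rfl hsmem.1 hsmem.2) (hIb s T hsmem.1 hsmem.2 le_rfl)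
      have h2 : 0 ≤ ∫ x in t..s, b x :=
        intervalIntegral.integral_nonneg hsmem.1 (fun x hx => hb0 x (ht.trans hx.1))
      have h3 := hB t ht
      rw [← hT] at h3
      linarith
    have hys : 0 ≤ y s := hy0 s (ht.trans hsmem.1)
    have hA0 : 0 ≤ ∫ x in s..T, a x :=
      intervalIntegral.integral_nonneg hsmem.2 (fun x hx => ha0 x ((ht.trans hsmem.1).trans hx.1))
    refine hchain.trans ?_
    apply mul_le_mul (by linarith) (Real.exp_le_exp.2 hbk) (Real.exp_pos _).le (by linarith)
  -- integrate the inequality over s ∈ [t, T]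
  have hIy : IntervalIntegrable y volume t T := (hint t ht).2.2
  have hgint : IntervalIntegrable (fun s => (y s + k₁) * Real.exp k₂) volume t T :=
    (hIy.add intervalIntegrable_const).mul_const _
  have hmono := intervalIntegral.integral_mono_on htT
    (intervalIntegrable_const : IntervalIntegrable (fun _ => y T) volume t T) hgint key
  have hlhs : (∫ _ in t..T, y T) = r * y T := by
    simp [hT, intervalIntegral.integral_const]
  have hrhs : (∫ s in t..T, (y s + k₁) * Real.exp k₂)
      = ((∫ s in t..T, y s) + r * k₁) * Real.exp k₂ := by
    rw [intervalIntegral.integral_mul_const, intervalIntegral.integral_add hIy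
      intervalIntegrable_const, intervalIntegral.integral_const]
    simp [hT]
  rw [hlhs, hrhs] at hmono
  have hy3 := hY t ht
  rw [← hT] at hy3
  have hfin : r * y T ≤ (k₃ + r * k₁) * Real.exp k₂ := by nlinarith
  have heq : (k₃/r + k₁) * Real.exp k₂ = ((k₃ + r*k₁) * Real.exp k₂)/r := by
    field_simp
  rw [heq, le_div_iff₀ hr]
  linarith
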